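/- For all integers k ≥ 1 and n ≥ 1, the last-return decomposition gives m(n,k) = ∑_{j=0}^{n−1} m(j)·m(n−1−j, k−1). -/

import Mathlib

/-- Steps of a Motzkin path: up, down, flat. -/
inductive Step : Type
  | U : Step
  | D : Step
  | F : Step
  deriving DecidableEq

instance instFintypeStep : Fintype Step :=
  ⟨{Step.U, Step.D, Step.F}, fun x => by cases x <;> simp⟩

/-- The value (vertical displacement) of a step. -/
def Step.val : Step → ℤ
  | .U => 1
  | .D => -1
  | .F => 0

/-- The partial sum of the first `i` step values of the word `w`. -/
def psum {n : ℕ} (w : Fin n → Step) (i : ℕ) : ℤ :=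
  ∑ j : Fin n, if (j : ℕ) < i then (w j).val else 0

/-- A word is peakless if no up-step is immediately followed by a down-step. -/
def Peakless {n : ℕ} (w : Fin n → Step) : Prop :=
  ∀ i : ℕ, ∀ h : i + 1 < n,
    ¬(w ⟨i, Nat.lt_of_succ_lt h⟩ = Step.U ∧ w ⟨i + 1, h⟩ = Step.D)

/-- `w` is a peakless Motzkin path from level `0` to level `k`:
all partial sums are nonnegative, the total sum is `k`, and there is no peak. -/
def IsPeaklessMotzkinTo {n : ℕ} (w : Fin n → Step) (k : ℤ) : Prop :=
  (∀ i : ℕ, 0 ≤ psum w i) ∧ psum w n = k ∧ Peakless w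

/-- The height of a path: the maximum of its partial sums (0 for the empty path). -/
def height {n : ℕ} (w : Fin n → Step) : ℤ :=
  (Finset.range (n + 1)).sup' Finset.nonempty_range_add_one (psum w)

/-- `mTo n k`: the number of peakless Motzkin paths of length `n` from level `0` to level `k`. -/
noncomputable def mTo (n : ℕ) (k : ℤ) : ℕ :=
  Nat.card {w : Fin n → Step // IsPeaklessMotzkinTo w k}

/-- `m n`: the number of peakless Motzkin paths of length `n`. -/
noncomputable def m (n : ℕ) : ℕ := mTo n 0

/-- `A n ℓ`: the number of peakless Motzkin paths of length `n` of height at most `ℓ`. -/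
noncomputable def A (n ℓ : ℕ) : ℕ :=
  Nat.card {w : Fin n → Step // IsPeaklessMotzkinTo w 0 ∧ height w ≤ (ℓ : ℤ)}

lemma psum_zero {n : ℕ} (w : Fin n → Step) : psum w 0 = 0 := by
  simp [psum]

lemma psum_succ {n : ℕ} (w : Fin n → Step) (i : ℕ) :
    psum w (i + 1) = psum w i + (if h : i < n then (w ⟨i, h⟩).val else 0) := by
  have key : psum w (i + 1) = psum w i + ∑ j : Fin n, if (j : ℕ) = i then (w j).val else 0 := by
    unfold psum
    rw [← Finset.sum_add_distrib]
    apply Finset.sum_congr rfl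
    intro j _
    rcases lt_trichotomy (j : ℕ) i with h | h | h
    · simp [h, Nat.lt_succ_of_lt h, Nat.ne_of_lt h]
    · simp [h]
    · rw [if_neg (by omega), if_neg (by omega), if_neg (by omega)]; ring
  rw [key]
  congr 1
  by_cases h : i < n
  · rw [dif_pos h,
      show (∑ j : Fin n, if (j : ℕ) = i then (w j).val else 0)
        = ∑ j : Fin n, if j = ⟨i, h⟩ then (w j).val else 0 from
        Finset.sum_congr rfl (by intro j _; simp [Fin.ext_iff])]
    simp
  · rw [dif_neg h]
    apply Finset.sum_eq_zero
    intro j _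
    have := j.isLt
    rw [if_neg (by omega)]

lemma psum_stable {n : ℕ} (w : Fin n → Step) {i : ℕ} (hi : n ≤ i) :
    psum w i = psum w n := by
  unfold psum
  apply Finset.sum_congr rfl
  intro j _
  have := j.isLt
  rw [if_pos (by omega), if_pos (by omega)]

lemma psum_shift {a b : ℕ} (w : Fin b → Step) (c : ℕ) (v : Fin a → Step)
    (hab : c + a ≤ b)
    (hc : ∀ (t : ℕ) (ht : t < a), w ⟨c + t, by omega⟩ = v ⟨t, ht⟩) :
    ∀ i ≤ a, psum w (c + i) = psum w c + psum v i := by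
  intro i
  induction i with
  | zero => simp [psum_zero]
  | succ i ih =>
    intro hi
    have hi' : i ≤ a := by omega
    have hiv : i < a := by omega
    rw [show c + (i + 1) = (c + i) + 1 from rfl, psum_succ, ih hi', psum_succ,
      dif_pos (show c + i < b by omega), dif_pos hiv, hc i hiv]
    ring

def glue (n j : ℕ) (u : Fin j → Step) (v : Fin (n - 1 - j) → Step) : Fin n → Step :=
  fun i => if h : (i : ℕ) < j then u ⟨i, h⟩
    else if h2 : (i : ℕ) = j then Step.U
    else v ⟨(i : ℕ) - j - 1, by have := i.isLt; omega⟩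

lemma glue_lt {n j : ℕ} (u : Fin j → Step) (v : Fin (n - 1 - j) → Step)
    {t : ℕ} (ht : t < j) (ht' : t < n) : glue n j u v ⟨t, ht'⟩ = u ⟨t, ht⟩ := by
  simp [glue, ht]

lemma glue_eq {n j : ℕ} (u : Fin j → Step) (v : Fin (n - 1 - j) → Step)
    (hj : j < n) : glue n j u v ⟨j, hj⟩ = Step.U := by
  simp [glue]

lemma glue_gt {n j : ℕ} (u : Fin j → Step) (v : Fin (n - 1 - j) → Step)
    {t : ℕ} (ht : t < n - 1 - j) (ht' : j + 1 + t < n) :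
    glue n j u v ⟨j + 1 + t, ht'⟩ = v ⟨t, ht⟩ := by
  have h1 : ¬ (j + 1 + t < j) := by omega
  have h2 : ¬ (j + 1 + t = j) := by omega
  simp only [glue, dif_neg h1, dif_neg h2]
  exact congrArg v (Fin.ext (by simp only []; omega))

lemma psum_glue_le {n j : ℕ} (hj : j ≤ n) (u : Fin j → Step) (v : Fin (n - 1 - j) → Step)
    {i : ℕ} (hi : i ≤ j) : psum (glue n j u v) i = psum u i := by
  have := psum_shift (glue n j u v) 0 u (by omega)
    (fun t ht => by
      have e : (⟨0 + t, by omega⟩ : Fin n) = ⟨t, by omega⟩ := Fin.ext (show 0 + t = t by omega)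
      rw [e]; exact glue_lt u v ht (by omega)) i hi
  simpa [psum_zero] using this

lemma psum_glue_up {n j : ℕ} (hj : j < n) (u : Fin j → Step) (v : Fin (n - 1 - j) → Step) :
    psum (glue n j u v) (j + 1) = psum u j + 1 := by
  rw [psum_succ, psum_glue_le (le_of_lt hj) u v le_rfl, dif_pos hj, glue_eq u v hj]
  rfl

lemma psum_glue_gt {n j : ℕ} (hj : j < n) (u : Fin j → Step) (v : Fin (n - 1 - j) → Step)
    {i : ℕ} (hi : i ≤ n - 1 - j) :
    psum (glue n j u v) (j + 1 + i) = psum u j + 1 + psum v i := by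
  have := psum_shift (glue n j u v) (j + 1) v (by omega)
    (fun t ht => glue_gt u v ht (by omega)) i hi
  rw [this, psum_glue_up hj u v]

lemma isP_glue {n j : ℕ} (hj : j < n) {k : ℤ} (hk : 1 ≤ k)
    (u : Fin j → Step) (v : Fin (n - 1 - j) → Step)
    (hu : IsPeaklessMotzkinTo u 0) (hv : IsPeaklessMotzkinTo v (k - 1)) :
    IsPeaklessMotzkinTo (glue n j u v) k := by
  obtain ⟨hu1, hu2, hu3⟩ := hu
  obtain ⟨hv1, hv2, hv3⟩ := hv
  have htotal : psum (glue n j u v) n = k := by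
    have h1 : psum (glue n j u v) (j + 1 + (n - 1 - j)) = psum u j + 1 + psum v (n - 1 - j) :=
      psum_glue_gt hj u v le_rfl
    rw [show j + 1 + (n - 1 - j) = n by omega] at h1
    rw [h1, hu2, hv2]; ring
  refine ⟨?_, htotal, ?_⟩
  · intro i
    rcases le_or_gt i j with h | h
    · rw [psum_glue_le (le_of_lt hj) u v h]; exact hu1 i
    · rcases le_or_gt i n with h2 | h2
      · have e : i = j + 1 + (i - j - 1) := by omega
        rw [e, psum_glue_gt hj u v (by omega), hu2]
        have := hv1 (i - j - 1)
        linarith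
      · rw [psum_stable _ (le_of_lt h2), htotal]; omega
  · intro i hi hpair
    obtain ⟨hUi, hDi⟩ := hpair
    rcases lt_trichotomy (i + 1) j with h | h | h
    · refine hu3 i h ⟨?_, ?_⟩
      · rw [← glue_lt u v (by omega) (by omega)]; exact hUi
      · rw [← glue_lt u v h (by omega)]; exact hDi
    · have e : (⟨i + 1, hi⟩ : Fin n) = ⟨j, hj⟩ := Fin.ext (show i + 1 = j by omega)
      rw [e, glue_eq u v hj] at hDi
      exact Step.noConfusion hDi
    · rcases Nat.lt_or_ge j i with h' | h'
      · -- both i and i+1 in the v-part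
        have ht1 : i - j - 1 < n - 1 - j := by omega
        have ht2 : i - j - 1 + 1 < n - 1 - j := by omega
        refine hv3 (i - j - 1) ht2 ⟨?_, ?_⟩
        · have e : (⟨i, Nat.lt_of_succ_lt hi⟩ : Fin n) = ⟨j + 1 + (i - j - 1), by omega⟩ :=
            Fin.ext (show i = j + 1 + (i - j - 1) by omega)
          rw [e, glue_gt u v ht1 (by omega)] at hUi
          exact hUi
        · have e : (⟨i + 1, hi⟩ : Fin n) = ⟨j + 1 + (i - j - 1 + 1), by omega⟩ :=
            Fin.ext (show i + 1 = j + 1 + (i - j - 1 + 1) by omega)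
          rw [e, glue_gt u v ht2 (by omega)] at hDi
          exact hDi
      · -- i = j
        have hij : i = j := by omega
        subst hij
        have h0 : 0 < n - 1 - i := by omega
        have e : (⟨i + 1, hi⟩ : Fin n) = ⟨i + 1 + 0, by omega⟩ := Fin.ext (show i + 1 = i + 1 + 0 by omega)
        rw [e, glue_gt u v h0 (by omega)] at hDi
        have : psum v 1 = -1 := by
          rw [psum_succ, psum_zero, dif_pos h0, hDi]
          rfl
        have := hv1 1
        omega

lemma glue_lastzero {n j : ℕ} (hj : j < n)
    (u : Fin j → Step) (v : Fin (n - 1 - j) → Step)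
    (hu : IsPeaklessMotzkinTo u 0) (hv1 : ∀ i, 0 ≤ psum v i) :
    psum (glue n j u v) j = 0 ∧ ∀ i, j < i → i ≤ n → 1 ≤ psum (glue n j u v) i := by
  constructor
  · rw [psum_glue_le (le_of_lt hj) u v le_rfl]; exact hu.2.1
  · intro i h1 h2
    have e : i = j + 1 + (i - j - 1) := by omega
    rw [e, psum_glue_gt hj u v (by omega), hu.2.1]
    have := hv1 (i - j - 1)
    linarith

lemma exists_decomp {n : ℕ} (hn : 1 ≤ n) {k : ℤ} (hk : 1 ≤ k) (w : Fin n → Step)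
    (hw : IsPeaklessMotzkinTo w k) :
    ∃ j : Fin n, ∃ u : Fin (j : ℕ) → Step, ∃ v : Fin (n - 1 - (j : ℕ)) → Step,
      IsPeaklessMotzkinTo u 0 ∧ IsPeaklessMotzkinTo v (k - 1) ∧ w = glue n j u v := by
  classical
  obtain ⟨hw1, hw2, hw3⟩ := hw
  set S : Finset ℕ := (Finset.range n).filter (fun i => psum w i = 0) with hS
  have hS0 : 0 ∈ S := by
    simp [hS, Finset.mem_filter, psum_zero]
    omega
  set j : ℕ := S.max' ⟨0, hS0⟩ with hjdef
  have hjS : j ∈ S := S.max'_mem _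
  have hjn : j < n := (Finset.mem_filter.mp hjS).1 |> Finset.mem_range.mp
  have hj0 : psum w j = 0 := (Finset.mem_filter.mp hjS).2
  have hmax : ∀ i ∈ S, i ≤ j := fun i hi => S.le_max' i hi
  have pos : ∀ i, j < i → i ≤ n → 1 ≤ psum w i := by
    intro i h1 h2
    rcases eq_or_lt_of_le h2 with h3 | h3
    · rw [h3, hw2]; exact hk
    · have hne : psum w i ≠ 0 := by
        intro h0
        have : i ∈ S := Finset.mem_filter.mpr ⟨Finset.mem_range.mpr h3, h0⟩
        exact absurd (hmax i this) (by omega)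
      have := hw1 i
      omega
  have hstep : psum w (j + 1) = (w ⟨j, hjn⟩).val := by
    rw [psum_succ, dif_pos hjn, hj0, zero_add]
  have hU : w ⟨j, hjn⟩ = Step.U := by
    have h2 : 1 ≤ psum w (j + 1) := pos (j + 1) (Nat.lt_succ_self j) (by omega)
    cases hc : w ⟨j, hjn⟩ with
    | U => rfl
    | D => rw [hc] at hstep; simp [Step.val] at hstep; omega
    | F => rw [hc] at hstep; simp [Step.val] at hstep; omega
  have hw1' : psum w (j + 1) = 1 := by rw [hstep, hU]; rfl
  have hjv : ((⟨j, hjn⟩ : Fin n) : ℕ) = j := rfl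
  refine ⟨⟨j, hjn⟩, fun t => w ⟨t, by have := t.isLt; omega⟩,
    fun t => w ⟨j + 1 + t, by have := t.isLt; omega⟩, ?_, ?_, ?_⟩
  · -- prefix
    have hpre : ∀ i ≤ j, psum (fun t : Fin j => w ⟨t, by have := t.isLt; omega⟩) i = psum w i := by
      intro i hi
      have := psum_shift w 0 (fun t : Fin j => w ⟨t, by have := t.isLt; omega⟩) (by omega)
        (fun t ht => by exact congrArg w (Fin.ext (show 0 + t = t by omega))) i hi
      rw [show (0 : ℕ) + i = i from Nat.zero_add i, psum_zero] at this
      omega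
    refine ⟨?_, ?_, ?_⟩
    · intro i
      rcases le_or_gt i j with h | h
      · rw [hpre i h]; exact hw1 i
      · rw [psum_stable _ (le_of_lt h), hpre j le_rfl, hj0]
    · rw [hpre j le_rfl]; exact hj0
    · intro t ht hpair
      exact hw3 t (by omega) hpair
  · -- suffix
    have hsuf : ∀ i ≤ n - 1 - j,
        psum (fun t : Fin (n - 1 - j) => w ⟨j + 1 + t, by have := t.isLt; omega⟩) i
          = psum w (j + 1 + i) - 1 := by
      intro i hi
      have := psum_shift w (j + 1)
        (fun t : Fin (n - 1 - j) => w ⟨j + 1 + t, by have := t.isLt; omega⟩) (by omega)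
        (fun t ht => rfl) i hi
      rw [hw1'] at this
      omega
    refine ⟨?_, ?_, ?_⟩
    · intro i
      rcases le_or_gt i (n - 1 - j) with h | h
      · rw [hsuf i h]
        have := pos (j + 1 + i) (by omega) (by omega)
        omega
      · rw [psum_stable _ (le_of_lt h), hsuf _ le_rfl]
        have := pos (j + 1 + (n - 1 - j)) (by omega) (by omega)
        omega
    · rw [hsuf _ le_rfl, show j + 1 + (n - 1 - j) = n by omega, hw2]
    · intro t ht hpair
      exact hw3 (j + 1 + t) (by omega) hpair
  · -- glue equation
    funext i
    obtain ⟨iv, hilt⟩ := i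
    rcases lt_trichotomy iv j with h | h | h
    · rw [glue_lt _ _ h hilt]
    · have e : (⟨iv, hilt⟩ : Fin n) = ⟨j, hjn⟩ := Fin.ext h
      rw [e, glue_eq _ _ hjn, hU]
    · have e : (⟨iv, hilt⟩ : Fin n) = ⟨j + 1 + (iv - j - 1), by omega⟩ :=
        Fin.ext (show iv = j + 1 + (iv - j - 1) by omega)
      rw [e, glue_gt _ _ (show iv - j - 1 < n - 1 - j by omega) (by omega)]

/-- Last-return decomposition: for `k ≥ 1` and `n ≥ 1`,
`m(n,k) = ∑_{j=0}^{n−1} m(j)·m(n−1−j, k−1)`. -/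
theorem peakless_last_return_decomposition (k : ℕ) (hk : 1 ≤ k) (n : ℕ) (hn : 1 ≤ n) :
    mTo n (k : ℤ) = ∑ j ∈ Finset.range n, m j * mTo (n - 1 - j) ((k : ℤ) - 1) := by
  classical
  have hk' : (1 : ℤ) ≤ (k : ℤ) := by exact_mod_cast hk
  have hb : Nat.card (Σ j : Fin n,
      ({u : Fin (j : ℕ) → Step // IsPeaklessMotzkinTo u 0} ×
        {v : Fin (n - 1 - (j : ℕ)) → Step // IsPeaklessMotzkinTo v ((k : ℤ) - 1)}))
      = Nat.card {w : Fin n → Step // IsPeaklessMotzkinTo w (k : ℤ)} := by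
    apply Nat.card_eq_of_bijective (fun x => ⟨glue n x.1 x.2.1.1 x.2.2.1,
      isP_glue x.1.isLt hk' x.2.1.1 x.2.2.1 x.2.1.2 x.2.2.2⟩)
    constructor
    · rintro ⟨j1, ⟨u1, hu1⟩, ⟨v1, hv1⟩⟩ ⟨j2, ⟨u2, hu2⟩, ⟨v2, hv2⟩⟩ h
      have hval : glue n j1 u1 v1 = glue n j2 u2 v2 := congrArg Subtype.val h
      have hz1 := glue_lastzero j1.isLt u1 v1 hu1 hv1.1
      have hz2 := glue_lastzero j2.isLt u2 v2 hu2 hv2.1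
      have hjj : (j1 : ℕ) = (j2 : ℕ) := by
        by_contra hne
        rcases Nat.lt_or_ge (j1 : ℕ) (j2 : ℕ) with hlt | hge
        · have h1 := hz1.2 (j2 : ℕ) hlt (le_of_lt j2.isLt)
          rw [hval] at h1
          rw [hz2.1] at h1
          omega
        · have hlt' : (j2 : ℕ) < (j1 : ℕ) := by omega
          have h1 := hz2.2 (j1 : ℕ) hlt' (le_of_lt j1.isLt)
          rw [← hval] at h1
          rw [hz1.1] at h1
          omega
      have hj : j1 = j2 := Fin.ext hjj
      subst hj
      have hu : u1 = u2 := by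
        funext t
        have ht := congrFun hval ⟨(t : ℕ), by have := t.isLt; have := j1.isLt; omega⟩
        rw [glue_lt u1 v1 t.isLt, glue_lt u2 v2 t.isLt] at ht
        simpa using ht
      have hv : v1 = v2 := by
        funext t
        have ht := congrFun hval ⟨(j1 : ℕ) + 1 + (t : ℕ), by have := t.isLt; have := j1.isLt; omega⟩
        rw [glue_gt u1 v1 t.isLt, glue_gt u2 v2 t.isLt] at ht
        simpa using ht
      subst hu
      subst hv
      rfl
    · rintro ⟨w, hw⟩
      obtain ⟨j, u, v, hu, hv, hglue⟩ := exists_decomp hn hk' w hw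
      exact ⟨⟨j, ⟨u, hu⟩, ⟨v, hv⟩⟩, Subtype.ext hglue.symm⟩
  haveI F1 : ∀ j : Fin n, Fintype {u : Fin (j : ℕ) → Step // IsPeaklessMotzkinTo u 0} :=
    fun _ => Fintype.ofFinite _
  haveI F2 : ∀ j : Fin n,
      Fintype {v : Fin (n - 1 - (j : ℕ)) → Step // IsPeaklessMotzkinTo v ((k : ℤ) - 1)} :=
    fun _ => Fintype.ofFinite _
  rw [mTo, ← hb, Nat.card_eq_fintype_card, Fintype.card_sigma,
    ← Fin.sum_univ_eq_sum_range (fun j => m j * mTo (n - 1 - j) ((k : ℤ) - 1)) n]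
  apply Finset.sum_congr rfl
  intro j _
  rw [Fintype.card_prod, m, mTo, mTo, Nat.card_eq_fintype_card, Nat.card_eq_fintype_card]
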